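/- arXiv:1502.00241 — 5 statements merged into one kernel-verified Lean document; each statement's English description precedes it below -/
import Mathlib

section
/- If C₁ and C₂ are distinct points in the region S_C = {(x,y) : y ≥ 0, x ≥ 1/2, x² + y² ≤ 1}, then the triangles with vertices (0,0), (1,0), C₁ and (0,0), (1,0), C₂ are not similar. -/
open Real EuclideanGeometry

/-- A point of the Euclidean plane given by Cartesian coordinates. -/
noncomputable def pt (x y : ℝ) : EuclideanSpace ℝ (Fin 2) := WithLp.toLp 2 ![x, y]

/-- A plane similarity transformation: a map multiplying all distances by a
fixed positive ratio (equivalently, a composition of translations, rotations,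
reflections and dilations). -/
def IsPlaneSimilarity (f : EuclideanSpace ℝ (Fin 2) → EuclideanSpace ℝ (Fin 2)) : Prop :=
  ∃ r : ℝ, 0 < r ∧ ∀ p q, dist (f p) (f q) = r * dist p q

lemma two_eq {α : Type*} {b c y z : α} (h : ({b, c} : Multiset α) = {y, z}) :
    (b = y ∧ c = z) ∨ (b = z ∧ c = y) := by
  have hb : b ∈ ({y, z} : Multiset α) := h ▸ (by simp)
  simp at hb
  rcases hb with rfl | rfl
  · left
    refine ⟨rfl, ?_⟩
    have := (Multiset.cons_inj_right b).mp h
    simpa using this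
  · right
    refine ⟨rfl, ?_⟩
    rw [show ({y, b} : Multiset α) = {b, y} from Multiset.cons_swap y b {}] at h
    have := (Multiset.cons_inj_right b).mp h
    simpa using this

lemma three_eq {α : Type*} {a b c x y z : α} (h : ({a, b, c} : Multiset α) = {x, y, z}) :
    (a = x ∧ ((b = y ∧ c = z) ∨ (b = z ∧ c = y))) ∨
    (a = y ∧ ((b = x ∧ c = z) ∨ (b = z ∧ c = x))) ∨
    (a = z ∧ ((b = x ∧ c = y) ∨ (b = y ∧ c = x))) := by
  have ha : a ∈ ({x, y, z} : Multiset α) := h ▸ (by simp)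
  simp at ha
  rcases ha with rfl | rfl | rfl
  · exact Or.inl ⟨rfl, two_eq ((Multiset.cons_inj_right a).mp h)⟩
  · refine Or.inr (Or.inl ⟨rfl, ?_⟩)
    rw [show ({x, a, z} : Multiset α) = {a, x, z} from Multiset.cons_swap x a {z}] at h
    exact two_eq ((Multiset.cons_inj_right a).mp h)
  · refine Or.inr (Or.inr ⟨rfl, ?_⟩)
    rw [show ({x, y, a} : Multiset α) = {a, x, y} from by
      rw [show ({y, a} : Multiset α) = {a, y} from Multiset.cons_swap y a {}]
      exact Multiset.cons_swap x a {y}] at h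
    exact two_eq ((Multiset.cons_inj_right a).mp h)

lemma dsq (p q : EuclideanSpace ℝ (Fin 2)) :
    dist p q ^ 2 = (p 0 - q 0) ^ 2 + (p 1 - q 1) ^ 2 := by
  rw [EuclideanSpace.dist_eq, Real.sq_sqrt (by positivity)]
  simp [Fin.sum_univ_two, Real.dist_eq, sq_abs]

@[simp] lemma pt0 (x y : ℝ) : pt x y 0 = x := rfl
@[simp] lemma pt1 (x y : ℝ) : pt x y 1 = y := rfl

lemma key (r a₁ b₁ a₂ b₂ : ℝ) (hr : 0 < r) (h₁ : a₁ ≤ b₁) (hb₁ : b₁ ≤ 1)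
    (h₂ : a₂ ≤ b₂) (hb₂ : b₂ ≤ 1)
    (hc : (1 = r * 1 ∧ b₂ = r * b₁ ∧ a₂ = r * a₁) ∨
          (1 = r * 1 ∧ a₂ = r * b₁ ∧ b₂ = r * a₁) ∨
          (b₂ = r * 1 ∧ 1 = r * b₁ ∧ a₂ = r * a₁) ∨
          (b₂ = r * 1 ∧ a₂ = r * b₁ ∧ 1 = r * a₁) ∨
          (a₂ = r * 1 ∧ 1 = r * b₁ ∧ b₂ = r * a₁) ∨
          (a₂ = r * 1 ∧ b₂ = r * b₁ ∧ 1 = r * a₁)) :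
    a₁ = a₂ ∧ b₁ = b₂ := by
  rcases hc with ⟨e1, e2, e3⟩ | ⟨e1, e2, e3⟩ | ⟨e1, e2, e3⟩ | ⟨e1, e2, e3⟩ | ⟨e1, e2, e3⟩ | ⟨e1, e2, e3⟩ <;>
  · have hra : r * a₁ ≤ r * 1 := mul_le_mul_of_nonneg_left (h₁.trans hb₁) hr.le
    have hrb : r * b₁ ≤ r * 1 := mul_le_mul_of_nonneg_left hb₁ hr.le
    have hr1 : r = 1 := by linarith
    rw [hr1] at e1 e2 e3
    simp only [one_mul, mul_one] at e1 e2 e3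
    exact ⟨by linarith, by linarith⟩

set_option maxHeartbeats 1000000 in
/-- Distinct points of S_C give non-similar triangles on the base (0,0)-(1,0). -/
theorem stmt1 (C₁ C₂ : EuclideanSpace ℝ (Fin 2))
    (h₁ : 0 ≤ C₁ 1 ∧ 1/2 ≤ C₁ 0 ∧ (C₁ 0)^2 + (C₁ 1)^2 ≤ 1)
    (h₂ : 0 ≤ C₂ 1 ∧ 1/2 ≤ C₂ 0 ∧ (C₂ 0)^2 + (C₂ 1)^2 ≤ 1)
    (hne : C₁ ≠ C₂) :
    ¬ ∃ f : EuclideanSpace ℝ (Fin 2) → EuclideanSpace ℝ (Fin 2),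
        IsPlaneSimilarity f ∧
        Multiset.map f {pt 0 0, pt 1 0, C₁} = ({pt 0 0, pt 1 0, C₂} : Multiset (EuclideanSpace ℝ (Fin 2))) := by
  obtain ⟨hy₁, hx₁, hs₁⟩ := h₁
  obtain ⟨hy₂, hx₂, hs₂⟩ := h₂
  rintro ⟨f, ⟨r, hr, hf⟩, hmap⟩
  set A := pt 0 0 with hA
  set B := pt 1 0 with hB
  rw [show Multiset.map f {A, B, C₁} = {f A, f B, f C₁} by
    simp [Multiset.map_cons]] at hmap
  -- basic distances
  have hAB2 : dist A B ^ 2 = 1 := by rw [hA, hB, dsq]; simp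
  have hAB : dist A B = 1 := by
    nlinarith [dist_nonneg (x := A) (y := B), sq_nonneg (dist A B - 1), sq_nonneg (dist A B + 1)]
  have hd₁ : dist A C₁ ^ 2 = (0 - C₁ 0) ^ 2 + (0 - C₁ 1) ^ 2 := by
    have h := dsq A C₁; rw [hA] at h; simpa using h
  have hd₁' : dist B C₁ ^ 2 = (1 - C₁ 0) ^ 2 + (0 - C₁ 1) ^ 2 := by
    have h := dsq B C₁; rw [hB] at h; simpa using h
  have hd₂ : dist A C₂ ^ 2 = (0 - C₂ 0) ^ 2 + (0 - C₂ 1) ^ 2 := by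
    have h := dsq A C₂; rw [hA] at h; simpa using h
  have hd₂' : dist B C₂ ^ 2 = (1 - C₂ 0) ^ 2 + (0 - C₂ 1) ^ 2 := by
    have h := dsq B C₂; rw [hB] at h; simpa using h
  -- inequalities
  have hab₁ : dist B C₁ ≤ dist A C₁ := by
    nlinarith [dist_nonneg (x := B) (y := C₁), dist_nonneg (x := A) (y := C₁)]
  have hb₁1 : dist A C₁ ≤ 1 := by
    nlinarith [dist_nonneg (x := A) (y := C₁)]
  have hab₂ : dist B C₂ ≤ dist A C₂ := by
    nlinarith [dist_nonneg (x := B) (y := C₂), dist_nonneg (x := A) (y := C₂)]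
  have hb₂1 : dist A C₂ ≤ 1 := by
    nlinarith [dist_nonneg (x := A) (y := C₂)]
  -- the three similarity equations
  have q1 : dist (f A) (f B) = r * 1 := by rw [hf A B, hAB]
  have q2 : dist (f A) (f C₁) = r * dist A C₁ := hf A C₁
  have q3 : dist (f B) (f C₁) = r * dist B C₁ := hf B C₁
  have hmain : dist B C₁ = dist B C₂ ∧ dist A C₁ = dist A C₂ := by
    apply key r _ _ _ _ hr hab₁ hb₁1 hab₂ hb₂1
    rcases three_eq hmap with ⟨e1, ⟨e2, e3⟩ | ⟨e2, e3⟩⟩ | ⟨e1, ⟨e2, e3⟩ | ⟨e2, e3⟩⟩ |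
        ⟨e1, ⟨e2, e3⟩ | ⟨e2, e3⟩⟩
    · rw [e1, e2, hAB] at q1
      rw [e1, e3] at q2
      rw [e2, e3] at q3
      exact Or.inl ⟨q1, q2, q3⟩
    · rw [e1, e2] at q1
      rw [e1, e3, hAB] at q2
      rw [e2, e3, dist_comm C₂ B] at q3
      exact Or.inr (Or.inr (Or.inl ⟨q1, q2, q3⟩))
    · rw [e1, e2, dist_comm B A, hAB] at q1
      rw [e1, e3] at q2
      rw [e2, e3] at q3
      exact Or.inr (Or.inl ⟨q1, q2, q3⟩)
    · rw [e1, e2] at q1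
      rw [e1, e3, dist_comm B A, hAB] at q2
      rw [e2, e3, dist_comm C₂ A] at q3
      exact Or.inr (Or.inr (Or.inr (Or.inr (Or.inl ⟨q1, q2, q3⟩))))
    · rw [e1, e2, dist_comm C₂ A] at q1
      rw [e1, e3, dist_comm C₂ B] at q2
      rw [e2, e3, hAB] at q3
      exact Or.inr (Or.inr (Or.inr (Or.inl ⟨q1, q2, q3⟩)))
    · rw [e1, e2, dist_comm C₂ B] at q1
      rw [e1, e3, dist_comm C₂ A] at q2
      rw [e2, e3, dist_comm B A, hAB] at q3
      exact Or.inr (Or.inr (Or.inr (Or.inr (Or.inr ⟨q1, q2, q3⟩))))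
  -- conclude C₁ = C₂
  have E2 : (1 - C₁ 0) ^ 2 + (0 - C₁ 1) ^ 2 = (1 - C₂ 0) ^ 2 + (0 - C₂ 1) ^ 2 := by
    rw [← hd₁', ← hd₂', hmain.1]
  have E1 : (0 - C₁ 0) ^ 2 + (0 - C₁ 1) ^ 2 = (0 - C₂ 0) ^ 2 + (0 - C₂ 1) ^ 2 := by
    rw [← hd₁, ← hd₂, hmain.2]
  have hx : C₁ 0 = C₂ 0 := by linear_combination (E1 - E2) / 2
  have hyy : C₁ 1 ^ 2 = C₂ 1 ^ 2 := by
    linear_combination E1 - (C₁ 0 + C₂ 0) * hx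
  have hy : C₁ 1 = C₂ 1 := by
    rw [← Real.sqrt_sq hy₁, ← Real.sqrt_sq hy₂, hyy]
  refine hne (PiLp.ext fun i => ?_)
  fin_cases i
  · exact hx
  · exact hy
end

section
/- If B₁ and B₂ are distinct points in S_B = {(x,y) : y ≥ 0, x² + y² ≥ 1, (x-1)² + y² ≤ 1}, then the triangles with vertices (0,0), B₁, (1,0) and (0,0), B₂, (1,0) are not similar. -/
open Real EuclideanGeometry

lemma triple_eq {α : Type*} {a b c x y z : α}
    (h : ({a,b,c} : Multiset α) = {x,y,z}) :
    (a=x∧b=y∧c=z)∨(a=x∧b=z∧c=y)∨(a=y∧b=x∧c=z)∨(a=y∧b=z∧c=x)∨(a=z∧b=x∧c=y)∨(a=z∧b=y∧c=x) := by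
  classical
  simp only [Multiset.insert_eq_cons, Multiset.cons_eq_cons, Multiset.singleton_eq_cons_iff] at h
  aesop

lemma dist_sq (p q : EuclideanSpace ℝ (Fin 2)) :
    dist p q ^ 2 = (p 0 - q 0)^2 + (p 1 - q 1)^2 := by
  rw [EuclideanSpace.dist_eq, Real.sq_sqrt (by positivity)]
  simp [Fin.sum_univ_two, Real.dist_eq, sq_abs]

lemma ge_one_of_sq {d s : ℝ} (h : d^2 = s) (hd : 0 ≤ d) (hs : 1 ≤ s) : 1 ≤ d := by nlinarith

lemma le_one_of_sq {d s : ℝ} (h : d^2 = s) (hd : 0 ≤ d) (hs : s ≤ 1) : d ≤ 1 := by nlinarith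

lemma final_coords {x1 y1 x2 y2 : ℝ} (hy1 : 0 ≤ y1) (hy2 : 0 ≤ y2)
    (q1 : x1^2+y1^2 = x2^2+y2^2) (q2 : (x1-1)^2+y1^2 = (x2-1)^2+y2^2) :
    x1 = x2 ∧ y1 = y2 := by
  have hx : x1 = x2 := by nlinarith
  refine ⟨hx, ?_⟩
  subst hx
  have hsq : y1^2 = y2^2 := by nlinarith
  nlinarith

section arith
variable {r d1 d2 p1 p2 : ℝ} (hr : 0 < r) (g1 : 1 ≤ d1) (g2 : 1 ≤ d2)
  (m1 : 0 ≤ p1) (l1 : p1 ≤ 1) (m2 : 0 ≤ p2) (l2 : p2 ≤ 1)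

include hr g1 g2 m1 l1 m2 l2 in
lemma arithA (h1 : (1:ℝ) = r * 1) (h2 : d2 = r * d1) (h3 : p2 = r * p1) :
    d1 = d2 ∧ p1 = p2 := by
  have : r = 1 := by linarith
  subst this; constructor <;> linarith

include hr g1 g2 m1 l1 m2 l2 in
lemma arithB (h1 : d2 = r * 1) (h2 : (1:ℝ) = r * d1) (h3 : p2 = r * p1) :
    d1 = d2 ∧ p1 = p2 := by
  have hrle : r ≤ 1 := by nlinarith
  have : r = 1 := by linarith
  subst this; constructor <;> linarith

include hr g1 g2 m1 l1 m2 l2 in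
lemma arithC (h1 : p2 = r * 1) (h2 : d2 = r * d1) (h3 : (1:ℝ) = r * p1) :
    d1 = d2 ∧ p1 = p2 := by
  have hrge : 1 ≤ r := by nlinarith
  have : r = 1 := by linarith
  subst this; constructor <;> linarith

include hr g1 g2 m1 l1 m2 l2 in
lemma arithD (h1 : d2 = r * 1) (h2 : p2 = r * d1) (h3 : (1:ℝ) = r * p1) :
    d1 = d2 ∧ p1 = p2 := by
  have hrge : 1 ≤ r := by nlinarith
  have hd : 1 ≤ r * d1 := by nlinarith
  have : r = 1 := by nlinarith
  subst this
  constructor <;> nlinarith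

include hr g1 g2 m1 l1 m2 l2 in
lemma arithE (h1 : p2 = r * 1) (h2 : (1:ℝ) = r * d1) (h3 : d2 = r * p1) :
    d1 = d2 ∧ p1 = p2 := by
  have hrle : r ≤ 1 := by nlinarith
  have hd : r * p1 ≤ 1 := by nlinarith
  have : r = 1 := by nlinarith
  subst this
  constructor <;> nlinarith

include hr g1 g2 m1 l1 m2 l2 in
lemma arithF (h1 : (1:ℝ) = r * 1) (h2 : p2 = r * d1) (h3 : d2 = r * p1) :
    d1 = d2 ∧ p1 = p2 := by
  have : r = 1 := by linarith
  subst this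
  constructor <;> linarith
end arith

set_option linter.unusedSectionVars false
/-- Distinct points of S_B give non-similar triangles on the base (0,0)-(1,0). -/
theorem stmt3 (B₁ B₂ : EuclideanSpace ℝ (Fin 2))
    (h₁ : 0 ≤ B₁ 1 ∧ 1 ≤ (B₁ 0)^2 + (B₁ 1)^2 ∧ (B₁ 0 - 1)^2 + (B₁ 1)^2 ≤ 1)
    (h₂ : 0 ≤ B₂ 1 ∧ 1 ≤ (B₂ 0)^2 + (B₂ 1)^2 ∧ (B₂ 0 - 1)^2 + (B₂ 1)^2 ≤ 1)
    (hne : B₁ ≠ B₂) :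
    ¬ ∃ f : EuclideanSpace ℝ (Fin 2) → EuclideanSpace ℝ (Fin 2),
        IsPlaneSimilarity f ∧
        Multiset.map f {pt 0 0, B₁, pt 1 0} = ({pt 0 0, B₂, pt 1 0} : Multiset (EuclideanSpace ℝ (Fin 2))) := by
  rintro ⟨f, ⟨r, hr, hf⟩, hmap⟩
  obtain ⟨hy1, hd1, he1⟩ := h₁
  obtain ⟨hy2, hd2, he2⟩ := h₂
  set A := pt 0 0 with hA
  set C := pt 1 0 with hC
  have hdA1 : dist A B₁ ^ 2 = (B₁ 0)^2 + (B₁ 1)^2 := by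
    have := dist_sq A B₁; simpa [hA, pt] using this
  have hdA2 : dist A B₂ ^ 2 = (B₂ 0)^2 + (B₂ 1)^2 := by
    have := dist_sq A B₂; simpa [hA, pt] using this
  have hdC1 : dist C B₁ ^ 2 = (B₁ 0 - 1)^2 + (B₁ 1)^2 := by
    have := dist_sq C B₁
    simp only [hC, pt] at this
    convert this using 2 <;> ring_nf <;> simp [hC, pt] <;> ring
  have hdC2 : dist C B₂ ^ 2 = (B₂ 0 - 1)^2 + (B₂ 1)^2 := by
    have := dist_sq C B₂
    simp only [hC, pt] at this
    convert this using 2 <;> ring_nf <;> simp [hC, pt] <;> ring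
  have hAC : dist A C = 1 := by
    have h := dist_sq A C
    rw [← Real.sqrt_sq (dist_nonneg (x := A) (y := C)), h]
    norm_num [hA, hC, pt]
  have n1 : (0:ℝ) ≤ dist A B₁ := dist_nonneg
  have n2 : (0:ℝ) ≤ dist A B₂ := dist_nonneg
  have n3 : (0:ℝ) ≤ dist C B₁ := dist_nonneg
  have n4 : (0:ℝ) ≤ dist C B₂ := dist_nonneg
  have g1 : 1 ≤ dist A B₁ := ge_one_of_sq hdA1 n1 hd1
  have g2 : 1 ≤ dist A B₂ := ge_one_of_sq hdA2 n2 hd2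
  have l1 : dist C B₁ ≤ 1 := le_one_of_sq hdC1 n3 he1
  have l2 : dist C B₂ ≤ 1 := le_one_of_sq hdC2 n4 he2
  have hmap' : ({f A, f B₁, f C} : Multiset _) = {A, B₂, C} := by
    simpa using hmap
  have key : dist A B₁ = dist A B₂ ∧ dist C B₁ = dist C B₂ := by
    have hAC' := hf A C
    have hAB := hf A B₁
    have hCB := hf C B₁
    rw [hAC] at hAC'
    have c1 : dist B₂ C = dist C B₂ := dist_comm B₂ C
    have c2 : dist B₂ A = dist A B₂ := dist_comm B₂ A
    have c3 : dist C A = dist A C := dist_comm C A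
    rcases triple_eq hmap' with ⟨e1,e2,e3⟩|⟨e1,e2,e3⟩|⟨e1,e2,e3⟩|⟨e1,e2,e3⟩|⟨e1,e2,e3⟩|⟨e1,e2,e3⟩ <;>
      rw [e1, e3] at hAC' <;> rw [e1, e2] at hAB <;> rw [e3, e2] at hCB
    · -- fA=A, fB₁=B₂, fC=C
      rw [hAC] at hAC'
      exact arithA hr g1 g2 n3 l1 n4 l2 hAC' hAB hCB
    · -- fA=A, fB₁=C, fC=B₂
      rw [hAC] at hAB; rw [c1] at hCB
      exact arithB hr g1 g2 n3 l1 n4 l2 hAC' hAB hCB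
    · -- fA=B₂, fB₁=A, fC=C
      rw [c1] at hAC'; rw [c2] at hAB; rw [c3, hAC] at hCB
      exact arithC hr g1 g2 n3 l1 n4 l2 hAC' hAB hCB
    · -- fA=B₂, fB₁=C, fC=A
      rw [c2] at hAC'; rw [c1] at hAB; rw [hAC] at hCB
      exact arithD hr g1 g2 n3 l1 n4 l2 hAC' hAB hCB
    · -- fA=C, fB₁=A, fC=B₂
      rw [c3, hAC] at hAB; rw [c2] at hCB
      exact arithE hr g1 g2 n3 l1 n4 l2 hAC' hAB hCB
    · -- fA=C, fB₁=B₂, fC=A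
      rw [c3, hAC] at hAC'
      exact arithF hr g1 g2 n3 l1 n4 l2 hAC' hAB hCB
  obtain ⟨k1, k2⟩ := key
  have q1 : (B₁ 0)^2 + (B₁ 1)^2 = (B₂ 0)^2 + (B₂ 1)^2 := by
    rw [← hdA1, ← hdA2, k1]
  have q2 : (B₁ 0 - 1)^2 + (B₁ 1)^2 = (B₂ 0 - 1)^2 + (B₂ 1)^2 := by
    rw [← hdC1, ← hdC2, k2]
  obtain ⟨hx, hy⟩ := final_coords hy1 hy2 q1 q2
  apply hne
  ext i
  fin_cases i
  · exact hx
  · exact hy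
end

section
/- If a triangle has side lengths a ≤ b ≤ c with c > 0, then its C-normal point is ((−a² + b² + c²)/(2c²), √(−a⁴ − b⁴ − c⁴ + 2(a²b² + a²c² + b²c²))/(2c²)), i.e., the triangle with vertices (0,0), (1,0) and this point has side lengths a/c, b/c, 1 and lies in S_C. -/
open Real EuclideanGeometry

lemma dist_pt (x1 y1 x2 y2 : ℝ) :
    dist (pt x1 y1) (pt x2 y2) = Real.sqrt ((x1 - x2)^2 + (y1 - y2)^2) := by
  rw [EuclideanSpace.dist_eq, Fin.sum_univ_two]
  simp [pt, Real.dist_eq]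


/-- Formula for the C-normal point of a triangle with side lengths a ≤ b ≤ c. -/
theorem stmt9 (a b c : ℝ) (ha : 0 ≤ a) (hab : a ≤ b) (hbc : b ≤ c) (hc : 0 < c)
    (htri : c ≤ a + b) :
    dist (pt 0 0) (pt 1 0) = 1 ∧
    dist (pt 0 0) (pt ((-a^2 + b^2 + c^2) / (2*c^2))
      (Real.sqrt (-a^4 - b^4 - c^4 + 2*(a^2*b^2 + a^2*c^2 + b^2*c^2)) / (2*c^2))) = b / c ∧
    dist (pt 1 0) (pt ((-a^2 + b^2 + c^2) / (2*c^2))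
      (Real.sqrt (-a^4 - b^4 - c^4 + 2*(a^2*b^2 + a^2*c^2 + b^2*c^2)) / (2*c^2))) = a / c ∧
    0 ≤ Real.sqrt (-a^4 - b^4 - c^4 + 2*(a^2*b^2 + a^2*c^2 + b^2*c^2)) / (2*c^2) ∧
    1/2 ≤ (-a^2 + b^2 + c^2) / (2*c^2) ∧
    ((-a^2 + b^2 + c^2) / (2*c^2))^2 +
      (Real.sqrt (-a^4 - b^4 - c^4 + 2*(a^2*b^2 + a^2*c^2 + b^2*c^2)) / (2*c^2))^2 ≤ 1 := by
  have hQ : (0:ℝ) ≤ -a^4 - b^4 - c^4 + 2*(a^2*b^2 + a^2*c^2 + b^2*c^2) := by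
    have h1 : 0 ≤ a + b + c := by linarith
    have h2 : 0 ≤ a + b - c := by linarith
    have h3 : 0 ≤ a - b + c := by linarith
    have h4 : 0 ≤ -a + b + c := by linarith
    nlinarith [mul_nonneg (mul_nonneg h1 h2) (mul_nonneg h3 h4)]
  set Q := -a^4 - b^4 - c^4 + 2*(a^2*b^2 + a^2*c^2 + b^2*c^2) with hQdef
  have hs : Real.sqrt Q ^ 2 = Q := Real.sq_sqrt hQ
  have hsn : 0 ≤ Real.sqrt Q := Real.sqrt_nonneg Q
  have hb : 0 ≤ b := ha.trans hab
  have hc2 : (c:ℝ)^2 ≠ 0 := by positivity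
  refine ⟨?_, ?_, ?_, by positivity, ?_, ?_⟩
  · rw [dist_pt]; norm_num
  · rw [dist_pt]
    have : ((0:ℝ) - (-a^2 + b^2 + c^2) / (2*c^2))^2 + (0 - Real.sqrt Q / (2*c^2))^2
        = (b/c)^2 := by
      field_simp
      nlinarith [hs]
    rw [this, Real.sqrt_sq (by positivity)]
  · rw [dist_pt]
    have : ((1:ℝ) - (-a^2 + b^2 + c^2) / (2*c^2))^2 + (0 - Real.sqrt Q / (2*c^2))^2
        = (a/c)^2 := by
      field_simp
      nlinarith [hs]
    rw [this, Real.sqrt_sq (by positivity)]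
  · rw [div_le_div_iff₀ (by norm_num) (by positivity)]
    nlinarith
  · have : ((-a^2 + b^2 + c^2) / (2*c^2))^2 + (Real.sqrt Q / (2*c^2))^2 = (b/c)^2 := by
      field_simp
      nlinarith [hs]
    rw [this]
    have : (b/c)^2 ≤ 1^2 := by
      apply pow_le_pow_left₀ (by positivity)
      rw [div_le_one hc]; exact hbc
      
    simpa using this
end

section
/- Let triangles T₁ = (A₁, B₁, C) and T₂ = (A₂, B₂, C) be normal circle triangles with C = (1,0), Aᵢ = (cos 2βᵢ, sin 2βᵢ), Bᵢ = (cos 2αᵢ, −sin 2αᵢ), where 0 < αᵢ ≤ π/3 and αᵢ ≤ βᵢ ≤ π/2 − αᵢ/2. If (A₁, B₁) ≠ (A₂, B₂), then T₁ and T₂ are not similar. -/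
open Real EuclideanGeometry

lemma dist_pt_s14 (x y x' y' : ℝ) :
    dist (pt x y) (pt x' y') = Real.sqrt ((x-x')^2 + (y-y')^2) := by
  simp [pt, EuclideanSpace.dist_eq, Fin.sum_univ_two, Real.dist_eq, sq_abs]

lemma dAC (b : ℝ) (hb : 0 ≤ b) (hb2 : b ≤ π) :
    dist (pt (cos (2*b)) (sin (2*b))) (pt 1 0) = 2 * sin b := by
  rw [dist_pt_s14]
  have h : (cos (2*b) - 1)^2 + (sin (2*b) - 0)^2 = (2 * sin b)^2 := by
    linear_combination (sin_sq_add_cos_sq (2*b)) - 2 * (cos_two_mul b)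
      - 4 * (sin_sq_add_cos_sq b)
  rw [h, Real.sqrt_sq (by have := Real.sin_nonneg_of_nonneg_of_le_pi hb hb2; linarith)]

lemma dBC (a : ℝ) (ha : 0 ≤ a) (ha2 : a ≤ π) :
    dist (pt (cos (2*a)) (-sin (2*a))) (pt 1 0) = 2 * sin a := by
  rw [dist_pt_s14]
  have h : (cos (2*a) - 1)^2 + (-sin (2*a) - 0)^2 = (2 * sin a)^2 := by
    linear_combination (sin_sq_add_cos_sq (2*a)) - 2 * (cos_two_mul a)
      - 4 * (sin_sq_add_cos_sq a)
  rw [h, Real.sqrt_sq (by have := Real.sin_nonneg_of_nonneg_of_le_pi ha ha2; linarith)]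

lemma dAB (a b : ℝ) (h : 0 ≤ a + b) (h2 : a + b ≤ π) :
    dist (pt (cos (2*b)) (sin (2*b))) (pt (cos (2*a)) (-sin (2*a))) = 2 * sin (a+b) := by
  rw [dist_pt_s14]
  have hc : cos (2*b + 2*a) = 1 - 2 * sin (a+b)^2 := by
    rw [show 2*b+2*a = 2*(a+b) by ring, cos_two_mul]
    linear_combination 2 * (sin_sq_add_cos_sq (a+b))
  have h' : (cos (2*b) - cos (2*a))^2 + (sin (2*b) - -sin (2*a))^2 = (2 * sin (a+b))^2 := by
    have hadd := Real.cos_add (2*b) (2*a)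
    linear_combination (sin_sq_add_cos_sq (2*b)) + (sin_sq_add_cos_sq (2*a))
      + 2 * hadd - 2 * hc
  rw [h', Real.sqrt_sq (by have := Real.sin_nonneg_of_nonneg_of_le_pi h h2; linarith)]

lemma F_id (a b : ℝ) :
    2*(sin a)^2*(sin b)^2 + 2*(sin b)^2*(sin (a+b))^2 + 2*(sin (a+b))^2*(sin a)^2
      - (sin a)^4 - (sin b)^4 - (sin (a+b))^4 = 4*(sin a)^2*(sin b)^2*(sin (a+b))^2 := by
  rw [Real.sin_add]
  linear_combination
    ((sin b)^4 - (cos a)^2*(sin b)^4 - 4*(sin a)*(cos a)*(sin b)^3*(cos b)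
      + 2*(sin a)^2*(sin b)^2 - 6*(sin a)^2*(sin b)^2*(cos b)^2 - 3*(sin a)^2*(sin b)^4)
      * (sin_sq_add_cos_sq a)
    + (-4*(sin a)^2*(sin b)^2 - 4*(sin a)^3*(cos a)*(sin b)*(cos b) + (sin a)^4
      - (sin a)^4*(cos b)^2 + 3*(sin a)^4*(sin b)^2) * (sin_sq_add_cos_sq b)

lemma perm3 {γ : Type*} {x y z u v w : γ} (h : ({x,y,z} : Multiset γ) = {u,v,w}) :
    (x=u∧y=v∧z=w) ∨ (x=u∧y=w∧z=v) ∨ (x=v∧y=u∧z=w) ∨ (x=v∧y=w∧z=u)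
      ∨ (x=w∧y=u∧z=v) ∨ (x=w∧y=v∧z=u) := by
  simp only [Multiset.insert_eq_cons, Multiset.cons_eq_cons, Multiset.singleton_eq_cons_iff] at h
  aesop

lemma sin_mono {x y : ℝ} (hx : -(π/2) ≤ x) (hxy : x ≤ y) (hy : y ≤ π/2) : sin x ≤ sin y :=
  Real.strictMonoOn_sin.monotoneOn ⟨hx, le_trans hxy hy⟩ ⟨le_trans hx hxy, hy⟩ hxy

lemma sin_le_third (a b : ℝ) (h0 : 0 < a) (hb : a ≤ b) (h2 : b ≤ π/2 - a/2) :
    sin b ≤ sin (a+b) := by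
  have hpi := Real.pi_pos
  rcases le_or_gt (a+b) (π/2) with h|h
  · exact sin_mono (by linarith) (by linarith) h
  · rw [show a+b = π - (π - (a+b)) by ring, Real.sin_pi_sub]
    exact sin_mono (by linarith) (by linarith) (by linarith)

lemma main_ineq (r a b c a' b' c' : ℝ) (hr : 0 < r) (ha : 0 < a) (hab : a ≤ b) (hbc : b ≤ c)
    (hab' : a' ≤ b') (hbc' : b' ≤ c')
    (hF : 2*a^2*b^2 + 2*b^2*c^2 + 2*c^2*a^2 - a^4 - b^4 - c^4 = 4*a^2*b^2*c^2)
    (hF' : 2*a'^2*b'^2 + 2*b'^2*c'^2 + 2*c'^2*a'^2 - a'^4 - b'^4 - c'^4 = 4*a'^2*b'^2*c'^2)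
    (hperm : (a' = r*a ∧ b' = r*b ∧ c' = r*c) ∨ (a' = r*a ∧ b' = r*c ∧ c' = r*b)
      ∨ (a' = r*b ∧ b' = r*a ∧ c' = r*c) ∨ (a' = r*b ∧ b' = r*c ∧ c' = r*a)
      ∨ (a' = r*c ∧ b' = r*a ∧ c' = r*b) ∨ (a' = r*c ∧ b' = r*b ∧ c' = r*a)) :
    a' = a ∧ b' = b ∧ c' = c := by
  have hb : 0 < b := lt_of_lt_of_le ha hab
  have hc : 0 < c := lt_of_lt_of_le hb hbc
  rcases hperm with ⟨h1,h2,h3⟩|⟨h1,h2,h3⟩|⟨h1,h2,h3⟩|⟨h1,h2,h3⟩|⟨h1,h2,h3⟩|⟨h1,h2,h3⟩ <;>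
    subst h1 <;> subst h2 <;> subst h3 <;>
  · have hK : (0:ℝ) < 4*a^2*b^2*c^2*r^4 := by positivity
    have h0 : 4*a^2*b^2*c^2*r^4*(r^2-1) = 0 := by linear_combination r^4 * hF - hF'
    have hr2 : r^2 = 1 := by
      rcases mul_eq_zero.mp h0 with h|h
      · exact absurd h hK.ne'
      · linarith
    have hr1 : r = 1 := by
      have h1 : (r-1)*(r+1) = 0 := by linear_combination hr2
      rcases mul_eq_zero.mp h1 with h|h <;> linarith
    subst hr1
    refine ⟨by linarith, by linarith, by linarith⟩

/-- Distinct normal circle triangles are not similar. -/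
theorem stmt14 (α₁ β₁ α₂ β₂ : ℝ)
    (h₁ : 0 < α₁ ∧ α₁ ≤ π/3 ∧ α₁ ≤ β₁ ∧ β₁ ≤ π/2 - α₁/2)
    (h₂ : 0 < α₂ ∧ α₂ ≤ π/3 ∧ α₂ ≤ β₂ ∧ β₂ ≤ π/2 - α₂/2)
    (hne : (pt (Real.cos (2*β₁)) (Real.sin (2*β₁)), pt (Real.cos (2*α₁)) (-Real.sin (2*α₁))) ≠
           (pt (Real.cos (2*β₂)) (Real.sin (2*β₂)), pt (Real.cos (2*α₂)) (-Real.sin (2*α₂)))) :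
    ¬ ∃ f : EuclideanSpace ℝ (Fin 2) → EuclideanSpace ℝ (Fin 2),
        IsPlaneSimilarity f ∧
        Multiset.map f {pt (Real.cos (2*β₁)) (Real.sin (2*β₁)),
            pt (Real.cos (2*α₁)) (-Real.sin (2*α₁)), pt 1 0} =
          ({pt (Real.cos (2*β₂)) (Real.sin (2*β₂)),
            pt (Real.cos (2*α₂)) (-Real.sin (2*α₂)), pt 1 0} : Multiset (EuclideanSpace ℝ (Fin 2))) := by
  rintro ⟨f, ⟨r, hr, hdist⟩, hmul⟩
  have hpi := Real.pi_pos
  obtain ⟨ha1, ha1', hab1, hb1⟩ := h₁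
  obtain ⟨ha2, ha2', hab2, hb2⟩ := h₂
  simp only [Multiset.insert_eq_cons, Multiset.map_cons, Multiset.map_singleton] at hmul
  have hp := perm3 hmul
  -- distances
  have hd1AB := dAB α₁ β₁ (by linarith) (by linarith)
  have hd1AC := dAC β₁ (by linarith) (by linarith)
  have hd1BC := dBC α₁ (by linarith) (by linarith)
  have hd2AB := dAB α₂ β₂ (by linarith) (by linarith)
  have hd2AC := dAC β₂ (by linarith) (by linarith)
  have hd2BC := dBC α₂ (by linarith) (by linarith)
  have hd2BA : dist (pt (cos (2*α₂)) (-sin (2*α₂))) (pt (cos (2*β₂)) (sin (2*β₂)))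
      = 2 * sin (α₂+β₂) := by rw [dist_comm]; exact hd2AB
  have hd2CA : dist (pt 1 0) (pt (cos (2*β₂)) (sin (2*β₂))) = 2 * sin β₂ := by
    rw [dist_comm]; exact hd2AC
  have hd2CB : dist (pt 1 0) (pt (cos (2*α₂)) (-sin (2*α₂))) = 2 * sin α₂ := by
    rw [dist_comm]; exact hd2BC
  have key : ∀ (X Y x y : EuclideanSpace ℝ (Fin 2)) (dxy dXY : ℝ), f X = x → f Y = y →
      dist x y = dxy → dist X Y = dXY → dxy = r * dXY := by
    intro X Y x y dxy dXY hX hY hd hD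
    rw [← hd, ← hD, ← hX, ← hY]; exact hdist X Y
  -- orderings and positivity
  have oa1 : sin α₁ ≤ sin β₁ := sin_mono (by linarith) hab1 (by linarith)
  have ob1 : sin β₁ ≤ sin (α₁+β₁) := sin_le_third α₁ β₁ ha1 hab1 hb1
  have oa2 : sin α₂ ≤ sin β₂ := sin_mono (by linarith) hab2 (by linarith)
  have ob2 : sin β₂ ≤ sin (α₂+β₂) := sin_le_third α₂ β₂ ha2 hab2 hb2
  have pa1 : 0 < sin α₁ := Real.sin_pos_of_pos_of_lt_pi ha1 (by linarith)
  have hF1 := F_id α₁ β₁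
  have hF2 := F_id α₂ β₂
  have finish : sin α₂ = sin α₁ ∧ sin β₂ = sin β₁ ∧ sin (α₂+β₂) = sin (α₁+β₁) → False := by
    rintro ⟨hsa, hsb, -⟩
    have hα : α₂ = α₁ := Real.injOn_sin ⟨by linarith, by linarith⟩ ⟨by linarith, by linarith⟩ hsa
    have hβ : β₂ = β₁ := Real.injOn_sin ⟨by linarith, by linarith⟩ ⟨by linarith, by linarith⟩ hsb
    exact hne (by rw [hα, hβ])
  rcases hp with ⟨h1,h2,h3⟩|⟨h1,h2,h3⟩|⟨h1,h2,h3⟩|⟨h1,h2,h3⟩|⟨h1,h2,h3⟩|⟨h1,h2,h3⟩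
  · have e1 := key _ _ _ _ _ _ h1 h2 hd2AB hd1AB
    have e2 := key _ _ _ _ _ _ h1 h3 hd2AC hd1AC
    have e3 := key _ _ _ _ _ _ h2 h3 hd2BC hd1BC
    exact finish (main_ineq r (sin α₁) (sin β₁) (sin (α₁+β₁)) (sin α₂) (sin β₂) (sin (α₂+β₂))
      hr pa1 oa1 ob1 oa2 ob2 hF1 hF2
      (Or.inl ⟨by linarith, by linarith, by linarith⟩))
  · have e1 := key _ _ _ _ _ _ h1 h2 hd2AC hd1AB
    have e2 := key _ _ _ _ _ _ h1 h3 hd2AB hd1AC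
    have e3 := key _ _ _ _ _ _ h2 h3 hd2CB hd1BC
    exact finish (main_ineq r (sin α₁) (sin β₁) (sin (α₁+β₁)) (sin α₂) (sin β₂) (sin (α₂+β₂))
      hr pa1 oa1 ob1 oa2 ob2 hF1 hF2
      (Or.inr (Or.inl ⟨by linarith, by linarith, by linarith⟩)))
  · have e1 := key _ _ _ _ _ _ h1 h2 hd2BA hd1AB
    have e2 := key _ _ _ _ _ _ h1 h3 hd2BC hd1AC
    have e3 := key _ _ _ _ _ _ h2 h3 hd2AC hd1BC
    exact finish (main_ineq r (sin α₁) (sin β₁) (sin (α₁+β₁)) (sin α₂) (sin β₂) (sin (α₂+β₂))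
      hr pa1 oa1 ob1 oa2 ob2 hF1 hF2
      (Or.inr (Or.inr (Or.inl ⟨by linarith, by linarith, by linarith⟩))))
  · have e1 := key _ _ _ _ _ _ h1 h2 hd2BC hd1AB
    have e2 := key _ _ _ _ _ _ h1 h3 hd2BA hd1AC
    have e3 := key _ _ _ _ _ _ h2 h3 hd2CA hd1BC
    exact finish (main_ineq r (sin α₁) (sin β₁) (sin (α₁+β₁)) (sin α₂) (sin β₂) (sin (α₂+β₂))
      hr pa1 oa1 ob1 oa2 ob2 hF1 hF2
      (Or.inr (Or.inr (Or.inr (Or.inr (Or.inl ⟨by linarith, by linarith, by linarith⟩))))))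
  · have e1 := key _ _ _ _ _ _ h1 h2 hd2CA hd1AB
    have e2 := key _ _ _ _ _ _ h1 h3 hd2CB hd1AC
    have e3 := key _ _ _ _ _ _ h2 h3 hd2AB hd1BC
    exact finish (main_ineq r (sin α₁) (sin β₁) (sin (α₁+β₁)) (sin α₂) (sin β₂) (sin (α₂+β₂))
      hr pa1 oa1 ob1 oa2 ob2 hF1 hF2
      (Or.inr (Or.inr (Or.inr (Or.inl ⟨by linarith, by linarith, by linarith⟩)))))
  · have e1 := key _ _ _ _ _ _ h1 h2 hd2CB hd1AB
    have e2 := key _ _ _ _ _ _ h1 h3 hd2CA hd1AC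
    have e3 := key _ _ _ _ _ _ h2 h3 hd2BA hd1BC
    exact finish (main_ineq r (sin α₁) (sin β₁) (sin (α₁+β₁)) (sin α₂) (sin β₂) (sin (α₂+β₂))
      hr pa1 oa1 ob1 oa2 ob2 hF1 hF2
      (Or.inr (Or.inr (Or.inr (Or.inr (Or.inr ⟨by linarith, by linarith, by linarith⟩))))))
end

section
/- Every multiset of four points in ℝ² containing at least two distinct points is similar (under plane similarity transformations) to a multiset {(0,0), (1,0), C, D} where C ∈ S_C, all six pairwise distances are at most 1, and D satisfies: |x_D − 1/2| ≤ |x_C − 1/2|, and if |x_D − 1/2| = |x_C − 1/2| then |y_D| ≤ |y_C|. -/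
open Real EuclideanGeometry

namespace Stmt18Aux

open ComplexConjugate

noncomputable def ofC (z : ℂ) : EuclideanSpace ℝ (Fin 2) := pt z.re z.im
noncomputable def toC (p : EuclideanSpace ℝ (Fin 2)) : ℂ := ⟨p 0, p 1⟩

lemma ofC_toC (p : EuclideanSpace ℝ (Fin 2)) : ofC (toC p) = p := by
  ext i; fin_cases i <;> simp [ofC, toC, pt]

lemma dist_ofC (z w : ℂ) : dist (ofC z) (ofC w) = ‖z - w‖ := by
  rw [EuclideanSpace.dist_eq]
  simp only [ofC, pt, Fin.sum_univ_two, Complex.norm_def, PiLp.toLp_apply, Complex.normSq_apply,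
    Matrix.cons_val_zero, Matrix.cons_val_one, Matrix.head_cons, Real.dist_eq,
    Complex.sub_re, Complex.sub_im, sq_abs]
  ring_nf

lemma dist_toC (p q : EuclideanSpace ℝ (Fin 2)) :
    ‖toC p - toC q‖ = dist p q := by
  rw [← dist_ofC, ofC_toC, ofC_toC]

lemma ofC_zero : ofC 0 = pt 0 0 := by simp [ofC]
lemma ofC_apply0 (z : ℂ) : ofC z 0 = z.re := rfl
lemma ofC_apply1 (z : ℂ) : ofC z 1 = z.im := rfl
lemma ofC_one : ofC 1 = pt 1 0 := by simp [ofC]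

lemma ms_swap12 {E : Type*} (a b c d : E) : ({a,b,c,d} : Multiset E) = {b,a,c,d} := by
  show a ::ₘ b ::ₘ _ = b ::ₘ a ::ₘ _
  rw [Multiset.cons_swap]

lemma ms_swap23 {E : Type*} (a b c d : E) : ({a,b,c,d} : Multiset E) = {a,c,b,d} := by
  show a ::ₘ b ::ₘ c ::ₘ _ = a ::ₘ c ::ₘ b ::ₘ _
  rw [Multiset.cons_swap b c]

lemma ms_swap34 {E : Type*} (a b c d : E) : ({a,b,c,d} : Multiset E) = {a,b,d,c} := by
  show a ::ₘ b ::ₘ c ::ₘ d ::ₘ _ = a ::ₘ b ::ₘ d ::ₘ c ::ₘ _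
  rw [Multiset.cons_swap c d]

lemma exists_max_pair {E : Type*} [MetricSpace E] (P₁ P₂ P₃ P₄ : E)
    (h : ¬ (P₁ = P₂ ∧ P₁ = P₃ ∧ P₁ = P₄)) :
    ∃ A B X Y : E, ({P₁,P₂,P₃,P₄} : Multiset E) = {A,B,X,Y} ∧ 0 < dist A B ∧
      dist A X ≤ dist A B ∧ dist A Y ≤ dist A B ∧ dist B X ≤ dist A B ∧
      dist B Y ≤ dist A B ∧ dist X Y ≤ dist A B := by
  set m := max (max (max (dist P₁ P₂) (dist P₁ P₃)) (max (dist P₁ P₄) (dist P₂ P₃)))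
      (max (dist P₂ P₄) (dist P₃ P₄)) with hm
  have h12 : dist P₁ P₂ ≤ m := by simp [hm]
  have h13 : dist P₁ P₃ ≤ m := by simp [hm]
  have h14 : dist P₁ P₄ ≤ m := by simp [hm]
  have h23 : dist P₂ P₃ ≤ m := by simp [hm]
  have h24 : dist P₂ P₄ ≤ m := by simp [hm]
  have h34 : dist P₃ P₄ ≤ m := by simp [hm]
  have hmpos : 0 < m := by
    by_contra hle
    push_neg at hle
    apply h
    exact ⟨dist_le_zero.mp (h12.trans hle), dist_le_zero.mp (h13.trans hle),
      dist_le_zero.mp (h14.trans hle)⟩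
  have hmem : m = dist P₁ P₂ ∨ m = dist P₁ P₃ ∨ m = dist P₁ P₄ ∨ m = dist P₂ P₃ ∨
      m = dist P₂ P₄ ∨ m = dist P₃ P₄ := by
    rw [hm]
    rcases max_choice (max (max (dist P₁ P₂) (dist P₁ P₃)) (max (dist P₁ P₄) (dist P₂ P₃)))
      (max (dist P₂ P₄) (dist P₃ P₄)) with h1 | h1 <;> rw [h1]
    · rcases max_choice (max (dist P₁ P₂) (dist P₁ P₃)) (max (dist P₁ P₄) (dist P₂ P₃)) with h2 | h2 <;> rw [h2]
      · rcases max_choice (dist P₁ P₂) (dist P₁ P₃) with h3 | h3 <;> rw [h3] <;> tauto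
      · rcases max_choice (dist P₁ P₄) (dist P₂ P₃) with h3 | h3 <;> rw [h3] <;> tauto
    · rcases max_choice (dist P₂ P₄) (dist P₃ P₄) with h3 | h3 <;> rw [h3] <;> tauto
  rcases hmem with he | he | he | he | he | he
  · exact ⟨P₁, P₂, P₃, P₄, rfl, he ▸ hmpos, he ▸ h13, he ▸ h14,
      he ▸ (dist_comm P₂ P₃ ▸ h23), he ▸ h24, he ▸ h34⟩
  · exact ⟨P₁, P₃, P₂, P₄, ms_swap23 _ _ _ _, he ▸ hmpos, he ▸ h12, he ▸ h14,
      he ▸ (dist_comm P₃ P₂ ▸ h23), he ▸ h34, he ▸ h24⟩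
  · exact ⟨P₁, P₄, P₂, P₃, (ms_swap34 P₁ P₂ P₃ P₄).trans (ms_swap23 _ _ _ _), he ▸ hmpos,
      he ▸ h12, he ▸ h13, he ▸ (dist_comm P₄ P₂ ▸ h24), he ▸ (dist_comm P₄ P₃ ▸ h34), he ▸ h23⟩
  · exact ⟨P₂, P₃, P₁, P₄, (ms_swap12 _ _ _ _).trans (ms_swap23 _ _ _ _), he ▸ hmpos,
      he ▸ (dist_comm P₂ P₁ ▸ h12), he ▸ h24, he ▸ (dist_comm P₃ P₁ ▸ h13), he ▸ h34, he ▸ h14⟩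
  · exact ⟨P₂, P₄, P₁, P₃, ((ms_swap12 _ _ _ _).trans (ms_swap34 _ _ _ _)).trans (ms_swap23 _ _ _ _),
      he ▸ hmpos, he ▸ (dist_comm P₂ P₁ ▸ h12), he ▸ h23, he ▸ (dist_comm P₄ P₁ ▸ h14),
      he ▸ (dist_comm P₄ P₃ ▸ h34), he ▸ h13⟩
  · refine ⟨P₃, P₄, P₁, P₂, ?_, he ▸ hmpos, he ▸ (dist_comm P₃ P₁ ▸ h13),
      he ▸ (dist_comm P₃ P₂ ▸ h23), he ▸ (dist_comm P₄ P₁ ▸ h14),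
      he ▸ (dist_comm P₄ P₂ ▸ h24), he ▸ h12⟩
    calc ({P₁,P₂,P₃,P₄} : Multiset E) = {P₁,P₃,P₂,P₄} := ms_swap23 _ _ _ _
      _ = {P₃,P₁,P₂,P₄} := ms_swap12 _ _ _ _
      _ = {P₃,P₁,P₄,P₂} := ms_swap34 _ _ _ _
      _ = {P₃,P₄,P₁,P₂} := ms_swap23 _ _ _ _

lemma abs_sub_comm' (z w : ℂ) : ‖z - w‖ = ‖w - z‖ :=
  norm_sub_rev _ _

lemma re_refl (z : ℂ) : |(1 - conj z).re - 1/2| = |z.re - 1/2| := by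
  simp only [Complex.sub_re, Complex.one_re, Complex.conj_re]
  rw [abs_sub_comm]; ring_nf

lemma re_refl' (z : ℂ) : |(1 - z).re - 1/2| = |z.re - 1/2| := by
  simp only [Complex.sub_re, Complex.one_re]
  rw [abs_sub_comm]; ring_nf

lemma core' (c d : ℂ)
    (hlex1 : |d.re - 1/2| ≤ |c.re - 1/2|)
    (hlex2 : |d.re - 1/2| = |c.re - 1/2| → |d.im| ≤ |c.im|) :
    ∃ (g : ℂ → ℂ), (∀ z w, ‖g z - g w‖ = ‖z - w‖) ∧
      ((g 0 = 0 ∧ g 1 = 1) ∨ (g 0 = 1 ∧ g 1 = 0)) ∧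
      0 ≤ (g c).im ∧ 1/2 ≤ (g c).re ∧
      |(g d).re - 1/2| ≤ |(g c).re - 1/2| ∧
      (|(g d).re - 1/2| = |(g c).re - 1/2| → |(g d).im| ≤ |(g c).im|) := by
  rcases le_or_gt (1/2) c.re with hre | hre <;> rcases le_or_gt 0 c.im with him | him
  · exact ⟨id, fun z w => rfl, Or.inl ⟨rfl, rfl⟩, him, hre, hlex1, hlex2⟩
  · refine ⟨fun z => conj z, fun z w => ?_, Or.inl ⟨by simp, by simp⟩, ?_, ?_, ?_, ?_⟩
    · rw [← map_sub, Complex.norm_conj]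
    · simpa using him.le
    · simpa using hre
    · simpa using hlex1
    · simpa using hlex2
  · refine ⟨fun z => 1 - conj z, fun z w => ?_, Or.inr ⟨by simp, by simp⟩, ?_, ?_, ?_, ?_⟩
    · have e : (1 - conj z) - (1 - conj w) = conj (w - z) := by
        rw [map_sub]; ring
      rw [e, Complex.norm_conj, abs_sub_comm']
    · simpa using him
    · simp only [Complex.sub_re, Complex.one_re, Complex.conj_re]; linarith
    · simpa only [re_refl] using hlex1
    · simp only [re_refl, Complex.sub_im, Complex.one_im, Complex.conj_im]
      intro he; simpa using hlex2 he
  · refine ⟨fun z => 1 - z, fun z w => ?_, Or.inr ⟨by simp, by simp⟩, ?_, ?_, ?_, ?_⟩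
    · have e : (1 - z) - (1 - w) = w - z := by ring
      rw [e, abs_sub_comm']
    · simp only [Complex.sub_im, Complex.one_im]; linarith
    · simp only [Complex.sub_re, Complex.one_re]; linarith
    · simpa only [re_refl'] using hlex1
    · simp only [re_refl', Complex.sub_im, Complex.one_im]
      intro he; simpa using hlex2 he

lemma core (c d : ℂ) :
    ∃ (g : ℂ → ℂ) (C D : ℂ), (∀ z w, ‖g z - g w‖ = ‖z - w‖) ∧
      ((g 0 = 0 ∧ g 1 = 1) ∨ (g 0 = 1 ∧ g 1 = 0)) ∧
      ((C = g c ∧ D = g d) ∨ (C = g d ∧ D = g c)) ∧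
      0 ≤ C.im ∧ 1/2 ≤ C.re ∧
      |D.re - 1/2| ≤ |C.re - 1/2| ∧
      (|D.re - 1/2| = |C.re - 1/2| → |D.im| ≤ |C.im|) := by
  rcases lt_trichotomy (|d.re - 1/2|) (|c.re - 1/2|) with hlt | heq | hgt
  · obtain ⟨g, h1, h2, h3⟩ := core' c d hlt.le (fun he => absurd he hlt.ne)
    exact ⟨g, g c, g d, h1, h2, Or.inl ⟨rfl, rfl⟩, h3⟩
  · rcases le_total (|d.im|) (|c.im|) with him | him
    · obtain ⟨g, h1, h2, h3⟩ := core' c d heq.le (fun _ => him)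
      exact ⟨g, g c, g d, h1, h2, Or.inl ⟨rfl, rfl⟩, h3⟩
    · obtain ⟨g, h1, h2, h3⟩ := core' d c heq.ge (fun _ => him)
      exact ⟨g, g d, g c, h1, h2, Or.inr ⟨rfl, rfl⟩, h3⟩
  · obtain ⟨g, h1, h2, h3⟩ := core' d c hgt.le (fun he => absurd he hgt.ne)
    exact ⟨g, g d, g c, h1, h2, Or.inr ⟨rfl, rfl⟩, h3⟩

end Stmt18Aux

open Stmt18Aux

/-- Longest distance normal form for quadrilaterals: every 4-point multiset
with at least two distinct points is similar to {(0,0), (1,0), C, D} with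
C ∈ S_C, all pairwise distances at most 1, and D quasilexicographically below C. -/
theorem stmt18 (P₁ P₂ P₃ P₄ : EuclideanSpace ℝ (Fin 2))
    (h : ¬ (P₁ = P₂ ∧ P₁ = P₃ ∧ P₁ = P₄)) :
    ∃ (C D : EuclideanSpace ℝ (Fin 2)) (f : EuclideanSpace ℝ (Fin 2) → EuclideanSpace ℝ (Fin 2)),
      IsPlaneSimilarity f ∧
      Multiset.map f {P₁, P₂, P₃, P₄} = ({pt 0 0, pt 1 0, C, D} : Multiset (EuclideanSpace ℝ (Fin 2))) ∧
      0 ≤ C 1 ∧ 1/2 ≤ C 0 ∧ (C 0)^2 + (C 1)^2 ≤ 1 ∧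
      dist (pt 0 0) (pt 1 0) ≤ 1 ∧ dist (pt 0 0) C ≤ 1 ∧ dist (pt 0 0) D ≤ 1 ∧
      dist (pt 1 0) C ≤ 1 ∧ dist (pt 1 0) D ≤ 1 ∧ dist C D ≤ 1 ∧
      |D 0 - 1/2| ≤ |C 0 - 1/2| ∧
      (|D 0 - 1/2| = |C 0 - 1/2| → |D 1| ≤ |C 1|) := by
  obtain ⟨A, B, X, Y, hms, hpos, hAX, hAY, hBX, hBY, hXY⟩ := exists_max_pair P₁ P₂ P₃ P₄ h
  set dAB := dist A B with hd
  set u := toC B - toC A with hudef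
  have hu : ‖u‖ = dAB := by rw [hudef, dist_toC, dist_comm]
  have hu0 : u ≠ 0 := by
    intro h0
    rw [h0] at hu; simp at hu; exact hpos.ne' hu.symm
  set g₀ : ℂ → ℂ := fun z => (z - toC A) / u with hg₀
  have hA0 : g₀ (toC A) = 0 := by simp [hg₀]
  have hB1 : g₀ (toC B) = 1 := by simp [hg₀]; exact div_self hu0
  obtain ⟨g, C', D', hg, h01, hCD, him, hre, hl1, hl2⟩ := core (g₀ (toC X)) (g₀ (toC Y))
  have habs : ∀ p q : EuclideanSpace ℝ (Fin 2),
      ‖g (g₀ (toC p)) - g (g₀ (toC q))‖ = dist p q / dAB := by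
    intro p q
    rw [hg]
    have e : g₀ (toC p) - g₀ (toC q) = (toC p - toC q) / u := by rw [hg₀]; ring
    rw [e, norm_div, hu, dist_toC]
  set f : EuclideanSpace ℝ (Fin 2) → EuclideanSpace ℝ (Fin 2) :=
    fun p => ofC (g (g₀ (toC p))) with hf
  have hsim : IsPlaneSimilarity f := by
    refine ⟨dAB⁻¹, inv_pos.mpr hpos, fun p q => ?_⟩
    rw [hf]
    simp only
    rw [dist_ofC, habs, div_eq_inv_mul]
  -- distances between normalized complex points
  have key : ∀ p q : EuclideanSpace ℝ (Fin 2), dist p q ≤ dAB →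
      ‖g (g₀ (toC p)) - g (g₀ (toC q))‖ ≤ 1 := by
    intro p q hpq
    rw [habs]
    exact (div_le_one hpos).mpr hpq
  -- abs facts for C' and D' against 0 and 1 and each other
  have habsC0 : ‖C' - 0‖ ≤ 1 ∧ ‖C' - 1‖ ≤ 1 ∧
      ‖D' - 0‖ ≤ 1 ∧ ‖D' - 1‖ ≤ 1 ∧ ‖C' - D'‖ ≤ 1 := by
    have k0X : ‖g (g₀ (toC X)) - g 0‖ ≤ 1 := by
      rw [← hA0]; exact key X A (by rw [dist_comm]; exact hAX)
    have k1X : ‖g (g₀ (toC X)) - g 1‖ ≤ 1 := by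
      rw [← hB1]; exact key X B (by rw [dist_comm]; exact hBX)
    have k0Y : ‖g (g₀ (toC Y)) - g 0‖ ≤ 1 := by
      rw [← hA0]; exact key Y A (by rw [dist_comm]; exact hAY)
    have k1Y : ‖g (g₀ (toC Y)) - g 1‖ ≤ 1 := by
      rw [← hB1]; exact key Y B (by rw [dist_comm]; exact hBY)
    have kXY : ‖g (g₀ (toC X)) - g (g₀ (toC Y))‖ ≤ 1 := key X Y hXY
    rcases hCD with ⟨hC, hD⟩ | ⟨hC, hD⟩ <;> rcases h01 with ⟨h0, h1⟩ | ⟨h0, h1⟩ <;>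
      rw [hC, hD] <;>
      refine ⟨?_, ?_, ?_, ?_, ?_⟩ <;>
      first
        | (rw [← h0]; assumption)
        | (rw [← h1]; assumption)
        | assumption
        | (rw [abs_sub_comm']; assumption)
  obtain ⟨k1, k2, k3, k4, k5⟩ := habsC0
  refine ⟨ofC C', ofC D', f, hsim, ?_, him, hre, ?_, ?_, ?_, ?_, ?_, ?_, ?_, ?_, ?_⟩
  · -- multiset equality
    rw [hms]
    show Multiset.map f (A ::ₘ B ::ₘ X ::ₘ {Y}) = _
    rw [Multiset.map_cons, Multiset.map_cons, Multiset.map_cons, Multiset.map_singleton]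
    have hfX : f X = ofC (g (g₀ (toC X))) := rfl
    have hfY : f Y = ofC (g (g₀ (toC Y))) := rfl
    have hfA : f A = ofC (g 0) := by rw [hf]; simp only [hA0]
    have hfB : f B = ofC (g 1) := by rw [hf]; simp only [hB1]
    rcases hCD with ⟨hC, hD⟩ | ⟨hC, hD⟩ <;> rcases h01 with ⟨h0, h1⟩ | ⟨h0, h1⟩
    · rw [hfA, hfB, h0, h1, ofC_zero, ofC_one, hfX, hfY, ← hC, ← hD]; rfl
    · rw [hfA, hfB, h0, h1, ofC_zero, ofC_one, hfX, hfY, ← hC, ← hD]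
      exact ms_swap12 _ _ _ _
    · rw [hfA, hfB, h0, h1, ofC_zero, ofC_one, hfX, hfY, ← hC, ← hD]
      exact ms_swap34 _ _ _ _
    · rw [hfA, hfB, h0, h1, ofC_zero, ofC_one, hfX, hfY, ← hC, ← hD]
      exact (ms_swap12 _ _ _ _).trans (ms_swap34 _ _ _ _)
  · -- C0^2 + C1^2 ≤ 1
    have : ‖C'‖ ≤ 1 := by simpa using k1
    have h2 : (‖C'‖)^2 ≤ 1 := by nlinarith [norm_nonneg C']
    rw [Complex.sq_norm, Complex.normSq_apply] at h2
    show (C'.re)^2 + (C'.im)^2 ≤ 1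
    nlinarith
  · rw [← ofC_zero, ← ofC_one, dist_ofC]; simp
  · rw [← ofC_zero, dist_ofC, abs_sub_comm']; simpa using k1
  · rw [← ofC_zero, dist_ofC, abs_sub_comm']; simpa using k3
  · rw [← ofC_one, dist_ofC, abs_sub_comm']; exact k2
  · rw [← ofC_one, dist_ofC, abs_sub_comm']; exact k4
  · rw [dist_ofC]; exact k5
  · rw [ofC_apply0, ofC_apply0]; exact hl1
  · rw [ofC_apply0, ofC_apply0, ofC_apply1, ofC_apply1]; exact hl2
end
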